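/- arXiv:1910.10385 — 2 statements merged into one kernel-verified Lean document; each statement's English description precedes it below -/
import Mathlib

section
/- Let (c_{k,n})_{k≥0} be the approximated Chebyshev coefficients of f using n quadrature points, extended by the aliasing anti-symmetry c_{n+j,n} = −c_{n−j,n} and c_{n,n} = 0. Fix n_q ≥ 1 and j with 0 ≤ j ≤ n−n_q−1. Let A_{n_p,n_q} be the n_q×(n_q+1) Toeplitz matrix with entries c_{i−k,n} for i = n_p+1,…,n_p+n_q and k = 0,…,n_q. Then A_{n+j,n_q} = −R_{n_q} A_{n−j−1,n_q} R_{n_q+1}, where R_m denotes the m×m flip matrix. -/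
/-- The `m × m` flip (anti-identity) matrix: ones on the anti-diagonal. -/
def flipMatrix (m : ℕ) : Matrix (Fin m) (Fin m) ℝ :=
  Matrix.of fun i j => if (i : ℕ) + (j : ℕ) = m - 1 then 1 else 0

lemma flip_mul_apply {m k : ℕ} (M : Matrix (Fin m) (Fin k) ℝ) (i : Fin m) (j : Fin k) :
    (flipMatrix m * M) i j = M i.rev j := by
  rw [Matrix.mul_apply]
  rw [Finset.sum_eq_single i.rev]
  · have : (i : ℕ) + (i.rev : ℕ) = m - 1 := by
      have := i.isLt
      simp [Fin.rev]; omega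
    have h1 : flipMatrix m i i.rev = 1 := by
      simp only [flipMatrix, Matrix.of_apply]; rw [if_pos this]
    rw [h1, one_mul]
  · intro b _ hb
    have : (i : ℕ) + (b : ℕ) ≠ m - 1 := by
      intro h
      apply hb
      have := i.isLt; have := b.isLt
      ext; simp [Fin.rev]; omega
    simp [flipMatrix, this]
  · simp

lemma mul_flip_apply {m k : ℕ} (M : Matrix (Fin m) (Fin k) ℝ) (i : Fin m) (j : Fin k) :
    (M * flipMatrix k) i j = M i j.rev := by
  rw [Matrix.mul_apply]
  rw [Finset.sum_eq_single j.rev]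
  · have : (j.rev : ℕ) + (j : ℕ) = k - 1 := by
      have := j.isLt
      simp [Fin.rev]; omega
    have h1 : flipMatrix k j.rev j = 1 := by
      simp only [flipMatrix, Matrix.of_apply]; rw [if_pos this]
    rw [h1, mul_one]
  · intro b _ hb
    have : (b : ℕ) + (j : ℕ) ≠ k - 1 := by
      intro h
      apply hb
      have := j.isLt; have := b.isLt
      ext; simp [Fin.rev]; omega
    simp [flipMatrix, this]
  · simp

/-- Flip relation between the Toeplitz matrices built from aliased Chebyshev coefficients:
`A_{n+j,n_q} = −R_{n_q} A_{n−j−1,n_q} R_{n_q+1}`. -/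
theorem toeplitz_flip_relation
    (n nq : ℕ) (hnq : 1 ≤ nq) (j : ℕ) (hj : j + nq + 1 ≤ n)
    (c : ℤ → ℝ)
    -- aliasing anti-symmetry of the approximated coefficients
    (hanti : ∀ i : ℤ, 1 ≤ i → i ≤ 2 * n → c ((n : ℤ) + i) = - c ((n : ℤ) - i))
    (hzero : c (n : ℤ) = 0)
    (A : ℤ → Matrix (Fin nq) (Fin (nq + 1)) ℝ)
    (hA : ∀ np : ℤ, A np = Matrix.of fun (i : Fin nq) (k : Fin (nq + 1)) => c (np + 1 + ((i : ℕ) : ℤ) - ((k : ℕ) : ℤ))) :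
    A ((n : ℤ) + j) = - (flipMatrix nq * A ((n : ℤ) - j - 1) * flipMatrix (nq + 1)) := by
  ext i k
  rw [Matrix.neg_apply, mul_flip_apply, flip_mul_apply, hA, hA]
  simp only [Matrix.of_apply]
  have hi := i.isLt
  have hk := k.isLt
  have hrevi : ((i.rev : ℕ) : ℤ) = (nq : ℤ) - 1 - (i : ℕ) := by
    simp [Fin.rev]; omega
  have hrevk : ((k.rev : ℕ) : ℤ) = (nq : ℤ) - (k : ℕ) := by
    simp [Fin.rev]; omega
  rw [hrevi, hrevk]
  set d : ℤ := (j : ℤ) + 1 + (i : ℕ) - (k : ℕ) with hd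
  have harg1 : (n : ℤ) + (j : ℤ) + 1 + (i : ℕ) - (k : ℕ) = (n : ℤ) + d := by omega
  have harg2 : (n : ℤ) - (j : ℤ) - 1 + 1 + ((nq : ℤ) - 1 - (i : ℕ)) - ((nq : ℤ) - (k : ℕ)) = (n : ℤ) - d := by
    omega
  rw [harg1, harg2]
  have hdle : d ≤ 2 * (n : ℤ) ∧ -d ≤ 2 * (n : ℤ) := by omega
  rcases lt_trichotomy d 0 with h | h | h
  · have h2 := hanti (-d) (by omega) (by omega)
    rw [show (n : ℤ) + -d = (n : ℤ) - d from by ring,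
        show (n : ℤ) - -d = (n : ℤ) + d from by ring] at h2
    rw [h2]; ring
  · rw [h]; simp [hzero]
  · rw [hanti d (by omega) (by omega)]
end

section
/- With the notation of the relation A_{n+j,n_q} = −R_{n_q} A_{n−j−1,n_q} R_{n_q+1} between the Toeplitz matrices built from aliased Chebyshev coefficients, a vector q ∈ ℝ^{n_q+1} lies in the kernel of A_{n+j,n_q} if and only if the flipped vector R_{n_q+1} q lies in the kernel of A_{n−j−1,n_q}. Hence the denominator coefficient vectors of the Padé–Chebyshev approximants of orders [(n−j−1)/n_q] and [(n+j)/n_q] are related by q^{n−j−1} = R_{n_q+1} q^{n+j}. -/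
lemma flip_mulVec (m : ℕ) (q : Fin m → ℝ) (i : Fin m) :
    (flipMatrix m).mulVec q i = q i.rev := by
  simp only [flipMatrix, Matrix.mulVec, dotProduct, Matrix.of_apply]
  rw [Finset.sum_eq_single i.rev]
  · rw [if_pos, one_mul]
    have := i.isLt
    simp only [Fin.val_rev]
    omega
  · intro b _ hb
    rw [if_neg, zero_mul]
    intro h
    apply hb
    have := i.isLt
    have hb' := b.isLt
    ext
    simp only [Fin.val_rev]
    omega
  · intro h; exact absurd (Finset.mem_univ _) h

/-- A vector `q` is in the kernel of `A_{n+j,n_q}` iff the flipped vector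
`R_{n_q+1} q` is in the kernel of `A_{n−j−1,n_q}`; hence the denominator coefficient
vectors of the Padé–Chebyshev approximants of orders `[(n−j−1)/n_q]` and `[(n+j)/n_q]`
are related by `q^{n−j−1} = R_{n_q+1} q^{n+j}`. -/
theorem pade_denominator_flip_relation
    (n nq : ℕ) (hnq : 1 ≤ nq) (j : ℕ) (hj : j + nq + 1 ≤ n)
    (c : ℤ → ℝ)
    (hanti : ∀ i : ℤ, 1 ≤ i → i ≤ 2 * n → c ((n : ℤ) + i) = - c ((n : ℤ) - i))
    (hzero : c (n : ℤ) = 0)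
    (A : ℤ → Matrix (Fin nq) (Fin (nq + 1)) ℝ)
    (hA : ∀ np : ℤ, A np =
      Matrix.of fun (i : Fin nq) (k : Fin (nq + 1)) => c (np + 1 + ((i : ℕ) : ℤ) - ((k : ℕ) : ℤ))) :
    ∀ q : Fin (nq + 1) → ℝ,
      (A ((n : ℤ) + j)).mulVec q = 0 ↔
        (A ((n : ℤ) - j - 1)).mulVec ((flipMatrix (nq + 1)).mulVec q) = 0 := by
  have hanti' : ∀ s : ℤ, -(2 * n) ≤ s → s ≤ 2 * n → c ((n : ℤ) + s) = - c ((n : ℤ) - s) := by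
    intro s h1 h2
    rcases lt_trichotomy s 0 with hs | hs | hs
    · have h := hanti (-s) (by omega) (by omega)
      rw [show (n : ℤ) + -s = (n : ℤ) - s by ring, show (n : ℤ) - -s = (n : ℤ) + s by ring] at h
      linarith
    · subst hs; simp [hzero]
    · exact hanti s hs h2
  intro q
  have key : ∀ i : Fin nq,
      (A ((n : ℤ) - j - 1)).mulVec ((flipMatrix (nq + 1)).mulVec q) i
        = - (A ((n : ℤ) + j)).mulVec q i.rev := by
    intro i
    have hi := i.isLt
    have hq : (flipMatrix (nq + 1)).mulVec q = fun k => q k.rev :=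
      funext (flip_mulVec _ q)
    rw [hq]
    simp only [hA, Matrix.mulVec, dotProduct, Matrix.of_apply]
    rw [← Finset.sum_neg_distrib]
    apply Fintype.sum_equiv (Fin.revPerm (n := nq + 1))
    intro k
    have hk := k.isLt
    simp only [Fin.revPerm_apply]
    have hkr : ((k.rev : ℕ) : ℤ) = (nq : ℤ) - (k : ℕ) := by
      simp only [Fin.val_rev]; omega
    have hir : ((i.rev : ℕ) : ℤ) = (nq : ℤ) - 1 - (i : ℕ) := by
      simp only [Fin.val_rev]; omega
    have hs := hanti' ((j : ℤ) + (k : ℕ) - (i : ℕ)) (by omega) (by omega)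
    have e1 : (n : ℤ) - (j : ℕ) - 1 + 1 + ((i : ℕ) : ℤ) - ((k : ℕ) : ℤ)
        = (n : ℤ) - ((j : ℤ) + (k : ℕ) - (i : ℕ)) := by ring
    have e2 : (n : ℤ) + (j : ℕ) + 1 + ((i.rev : ℕ) : ℤ) - ((k.rev : ℕ) : ℤ)
        = (n : ℤ) + ((j : ℤ) + (k : ℕ) - (i : ℕ)) := by rw [hkr, hir]; ring
    rw [e1, e2, hs]
    ring
  constructor
  · intro h
    funext i
    rw [key i, congrFun h i.rev]
    simp
  · intro h
    funext i
    have hk := key i.rev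
    rw [Fin.rev_rev, congrFun h i.rev] at hk
    have : (A ((n : ℤ) + (j : ℕ))).mulVec q i = 0 := by
      have := hk.symm
      simpa using this
    simpa using this
end
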